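/- For any message length m and key length k with m > k ≥ 1, and any prime power q with q ≥ m + k + 1, there exists a proper t-threshold secure coding scheme over F_q with threshold t = k. Concretely, setting n = m + k and choosing pairwise distinct α_1, …, α_n ∈ F_q, the n×m matrix W with W(j, i) = α_j^{i−1} has the property that any m of its rows are linearly independent; hence for any choice of message index set A with |A| = m the scheme is proper (rank(W_A) = m and rank(W_{A^c}) = k), and for u uniformly distributed on F_q^n and any B ⊆ {1,…,n} with |B| ≤ k, the vector (u_i)_{i∈B} is independent of the codeword c = u·W. -/

import Mathlib

open Matrix

section Helpers

variable {R : Type*} [CommRing R]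

/-- Rank is invariant under reindexing rows by an equivalence. -/
lemma rank_submatrix_left_aux {l m n : Type} [Fintype l] [Fintype m] [Fintype n]
    (A : Matrix m n R) (e : l ≃ m) :
    (A.submatrix ⇑e id).rank = A.rank := by
  have h : (A.submatrix ⇑e id) = A.submatrix ⇑e ⇑(Equiv.refl n) := rfl
  rw [h, Matrix.rank, Matrix.rank, Matrix.mulVecLin_submatrix, LinearMap.range_comp,
    LinearMap.range_comp,
    show LinearMap.funLeft R R ⇑e = (LinearEquiv.funCongrLeft R R e : (m → R) →ₗ[R] (l → R))
      from rfl]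
  rw [show ⇑(Equiv.refl n).symm = id from rfl,
    show LinearMap.funLeft R R (id : n → n) = LinearMap.id from rfl,
    LinearMap.range_id, Submodule.map_top, LinearEquiv.finrank_map_eq]

variable {G H : Type*} [AddCommGroup G] [Fintype G] [DecidableEq G]
  [AddCommGroup H] [DecidableEq H]

lemma fiber_card_eq (f : G →+ H) (a : H) (u₀ : G) (h : f u₀ = a) :
    (Finset.univ.filter fun u => f u = a).card
      = (Finset.univ.filter fun u => f u = 0).card := by
  apply Finset.card_bij (fun u _ => u - u₀)
  · intro u hu
    simp only [Finset.mem_filter, Finset.mem_univ, true_and] at hu ⊢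
    rw [map_sub, hu, h, sub_self]
  · intro u _ v _ huv
    exact sub_left_injective huv
  · intro v hv
    refine ⟨v + u₀, ?_, by rw [add_sub_cancel_right]⟩
    simp only [Finset.mem_filter, Finset.mem_univ, true_and] at hv ⊢
    rw [map_add, hv, h, zero_add]

lemma fiber_card_mul (f : G →+ H) [Fintype H] (hf : Function.Surjective f) :
    (Finset.univ.filter fun u => f u = 0).card * Fintype.card H = Fintype.card G := by
  have hsum : (Finset.univ : Finset G).card
      = ∑ b ∈ (Finset.univ : Finset H), ((Finset.univ : Finset G).filter fun u => f u = b).card :=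
    Finset.card_eq_sum_card_fiberwise (fun x _ => Finset.mem_univ (f x))
  have heach : ∀ b : H, ((Finset.univ : Finset G).filter fun u => f u = b).card
      = ((Finset.univ : Finset G).filter fun u => f u = 0).card := by
    intro b
    obtain ⟨u₀, hu₀⟩ := hf b
    exact fiber_card_eq f b u₀ hu₀
  rw [← Finset.card_univ (α := G), hsum]
  simp only [heach]
  rw [Finset.sum_const, smul_eq_mul, Finset.card_univ, mul_comm]

end Helpers

/-- Existence of proper schemes with maximal threshold `t = k`.  For message
length `m`, key length `k` with `m > k ≥ 1`, `n = m + k`, and `q = |F| ≥ m + k + 1`, there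
exist pairwise distinct `α₁, …, α_n ∈ F` such that the `n × m` matrix `W(j, i) = α_j^(i-1)`
has any `m` of its rows linearly independent (every `m × m` row-submatrix is invertible);
hence for every message index set `A` with `|A| = m` the scheme is proper
(`rank W_A = m`, `rank W_{Aᶜ} = k`), and for `u` uniform on `F^n` and any `B` with `|B| ≤ k`,
the vector `(uᵢ)_{i ∈ B}` is independent of the codeword `c = u·W`. -/
theorem stmt_9 {F : Type} [Field F] [Fintype F] [DecidableEq F]
    (m k n : ℕ) (hk : 1 ≤ k) (hkm : k < m) (hn : n = m + k)
    (hq : m + k + 1 ≤ Fintype.card F) :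
    ∃ α : Fin n → F, Function.Injective α ∧
      ∀ W : Matrix (Fin n) (Fin m) F,
        (∀ (j : Fin n) (i : Fin m), W j i = α j ^ (i : ℕ)) →
        (∀ e : Fin m → Fin n, Function.Injective e → IsUnit (W.submatrix e id))
        ∧ (∀ A : Finset (Fin n), A.card = m →
            (W.submatrix (Subtype.val : {i // i ∈ A} → Fin n) id).rank = m
            ∧ (W.submatrix (Subtype.val : {i // i ∈ Aᶜ} → Fin n) id).rank = k)
        ∧ (∀ B : Finset (Fin n), B.card ≤ k →
            ∀ (a : {i // i ∈ B} → F) (c : Fin m → F),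
              (Finset.univ.filter (fun u : Fin n → F =>
                  (fun i : {i // i ∈ B} => u i.1) = a ∧ Matrix.vecMul u W = c)).card
                * Fintype.card (Fin n → F)
              = (Finset.univ.filter (fun u : Fin n → F =>
                  (fun i : {i // i ∈ B} => u i.1) = a)).card
                * (Finset.univ.filter (fun u : Fin n → F =>
                  Matrix.vecMul u W = c)).card) := by
  -- choose pairwise distinct α via an embedding `Fin n ↪ F`
  have hcard : Fintype.card (Fin n) ≤ Fintype.card F := by
    rw [Fintype.card_fin]; omega
  obtain ⟨emb⟩ := Function.Embedding.nonempty_of_card_le hcard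
  refine ⟨⇑emb, emb.injective, fun W hW => ?_⟩
  -- key fact: every injective selection of rows gives a unit (Vandermonde)
  have key : ∀ e : Fin m → Fin n, Function.Injective e → IsUnit (W.submatrix e id) := by
    intro e he
    have hV : W.submatrix e id = Matrix.vandermonde (fun i => emb (e i)) := by
      ext j i
      simp [Matrix.vandermonde, hW]
    rw [hV, Matrix.isUnit_iff_isUnit_det, isUnit_iff_ne_zero,
      Matrix.det_vandermonde_ne_zero_iff]
    exact emb.injective.comp he
  -- a version of key for k×k Vandermonde with column selection
  have keyk : ∀ e : Fin k → Fin n, Function.Injective e →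
      IsUnit (Matrix.of (fun (j : Fin k) (i : Fin k) => W (e j) (Fin.castLE hkm.le i))) := by
    intro e he
    have hV : Matrix.of (fun (j : Fin k) (i : Fin k) => W (e j) (Fin.castLE hkm.le i))
        = Matrix.vandermonde (fun i => emb (e i)) := by
      ext j i
      simp [Matrix.vandermonde, hW]
    rw [hV, Matrix.isUnit_iff_isUnit_det, isUnit_iff_ne_zero,
      Matrix.det_vandermonde_ne_zero_iff]
    exact emb.injective.comp he
  -- joint surjectivity of (restriction to B, vecMul · W), for |B| ≤ k
  have joint : ∀ B : Finset (Fin n), B.card ≤ k →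
      Function.Surjective (fun u : Fin n → F => ((fun i : {i // i ∈ B} => u i.1), u ᵥ* W)) := by
    intro B hB ⟨a, c⟩
    -- pick a subset C ⊆ Bᶜ of size m
    have hBc : m ≤ Bᶜ.card := by
      rw [Finset.card_compl, Fintype.card_fin]
      omega
    obtain ⟨C, hCB, hC⟩ := Finset.exists_subset_card_eq hBc
    have hCcard : Fintype.card {i // i ∈ C} = m := by
      rw [Fintype.card_coe, hC]
    let eC : Fin m ≃ {i // i ∈ C} := (Fintype.equivFinOfCardEq hCcard).symm
    let e : Fin m → Fin n := fun i => (eC i).1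
    have he : Function.Injective e :=
      Subtype.val_injective.comp eC.injective
    have heB : ∀ i, e i ∉ B := by
      intro i
      have : e i ∈ Bᶜ := hCB (eC i).2
      simpa [Finset.mem_compl] using this
    -- solve for the free coordinates using invertibility of W restricted to C
    have hunit := key e he
    have hsurj : Function.Surjective (fun w : Fin m → F => w ᵥ* (W.submatrix e id)) :=
      Matrix.vecMul_surjective_iff_isUnit.mpr hunit
    set u₀ : Fin n → F := fun j => if h : j ∈ B then a ⟨j, h⟩ else 0 with hu₀
    obtain ⟨w, hw⟩ := hsurj (c - u₀ ᵥ* W)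
    set v : Fin n → F := ∑ i : Fin m, Pi.single (e i) (w i) with hv
    refine ⟨u₀ + v, ?_⟩
    have hvB : ∀ j (_ : j ∈ B), v j = 0 := by
      intro j hj
      rw [hv]
      rw [Finset.sum_apply]
      apply Finset.sum_eq_zero
      intro i _
      apply Pi.single_eq_of_ne
      intro heq
      exact heB i (heq ▸ hj)
    have hvW : v ᵥ* W = c - u₀ ᵥ* W := by
      rw [← hw]
      ext j
      rw [hv]
      simp only [Matrix.vecMul, dotProduct, Matrix.submatrix_apply, id_eq,
        Finset.sum_apply, Finset.sum_mul]
      rw [Finset.sum_comm]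
      apply Finset.sum_congr rfl
      intro i _
      rw [Finset.sum_eq_single (e i)]
      · simp
      · intro b _ hb
        rw [Pi.single_eq_of_ne hb, zero_mul]
      · simp
    dsimp only
    rw [Prod.mk.injEq]
    constructor
    · ext i
      simp only [Pi.add_apply, hvB i.1 i.2, add_zero, hu₀, dif_pos i.2]
    · rw [Matrix.add_vecMul, hvW]
      abel
  refine ⟨key, ?_, ?_⟩
  · -- rank statements
    intro A hA
    constructor
    · have hAcard : Fintype.card {i // i ∈ A} = m := by rw [Fintype.card_coe, hA]
      let eA : Fin m ≃ {i // i ∈ A} := (Fintype.equivFinOfCardEq hAcard).symm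
      rw [← rank_submatrix_left_aux (W.submatrix (Subtype.val : {i // i ∈ A} → Fin n) id) eA]
      have hsub : (W.submatrix (Subtype.val : {i // i ∈ A} → Fin n) id).submatrix ⇑eA id
          = W.submatrix (fun i => (eA i).1) id := by
        rw [Matrix.submatrix_submatrix]
        rfl
      rw [hsub, Matrix.rank_of_isUnit (W.submatrix (fun i => (eA i).1) id)
        (key (fun i => (eA i).1) (fun x y h => eA.injective (Subtype.val_injective h))),
        Fintype.card_fin]
    · have hAc : Aᶜ.card = k := by
        rw [Finset.card_compl, hA, Fintype.card_fin]
        omega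
      have hAcard : Fintype.card {i // i ∈ Aᶜ} = k := by rw [Fintype.card_coe, hAc]
      set M := W.submatrix (Subtype.val : {i // i ∈ Aᶜ} → Fin n) id with hM
      have hub : M.rank ≤ k := by
        have := Matrix.rank_le_card_height M
        rwa [hAcard] at this
      have hlb : k ≤ M.rank := by
        let eA : Fin k ≃ {i // i ∈ Aᶜ} := (Fintype.equivFinOfCardEq hAcard).symm
        rw [← rank_submatrix_left_aux M eA]
        set M₂ := M.submatrix ⇑eA id with hM₂
        have hM₂' : M₂ = W.submatrix (fun i => (eA i).1) id := by
          rw [hM₂, hM, Matrix.submatrix_submatrix]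
          rfl
        let g : Fin k → Fin m := Fin.castLE hkm.le
        have hmul : M₂ * (1 : Matrix (Fin m) (Fin m) F).submatrix (Equiv.refl (Fin m)) g
            = M₂.submatrix id g := by
          rw [Matrix.mul_submatrix_one]
          rfl
        have hVu : IsUnit (M₂.submatrix id g) := by
          have : M₂.submatrix id g
              = Matrix.of (fun (j : Fin k) (i : Fin k) => W ((eA j).1) (Fin.castLE hkm.le i)) := by
            ext j i
            rw [hM₂']
            rfl
          rw [this]
          exact keyk (fun i => (eA i).1) (fun x y h => eA.injective (Subtype.val_injective h))
        calc k = (M₂.submatrix id g).rank := by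
              rw [Matrix.rank_of_isUnit _ hVu, Fintype.card_fin]
          _ = (M₂ * (1 : Matrix (Fin m) (Fin m) F).submatrix (Equiv.refl (Fin m)) g).rank := by
              rw [hmul]
          _ ≤ M₂.rank := Matrix.rank_mul_le_left _ _
      omega
  · -- counting / independence
    intro B hB a c
    -- additive homs
    let f₁ : (Fin n → F) →+ ({i // i ∈ B} → F) :=
      { toFun := fun u i => u i.1, map_zero' := rfl, map_add' := fun _ _ => rfl }
    let f₂ : (Fin n → F) →+ (Fin m → F) :=
      { toFun := fun u => u ᵥ* W, map_zero' := Matrix.zero_vecMul W,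
        map_add' := fun x y => Matrix.add_vecMul W x y }
    let f : (Fin n → F) →+ ({i // i ∈ B} → F) × (Fin m → F) := f₁.prod f₂
    have hfsurj : Function.Surjective f := joint B hB
    have hf₁surj : Function.Surjective f₁ := by
      intro a'
      obtain ⟨u, hu⟩ := hfsurj (a', 0)
      exact ⟨u, congrArg Prod.fst hu⟩
    have hf₂surj : Function.Surjective f₂ := by
      intro c'
      obtain ⟨u, hu⟩ := hfsurj (0, c')
      exact ⟨u, congrArg Prod.snd hu⟩
    obtain ⟨u₁, hu₁⟩ := hf₁surj a
    obtain ⟨u₂, hu₂⟩ := hf₂surj c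
    obtain ⟨u₃, hu₃⟩ := hfsurj (a, c)
    -- rewrite the three filters
    have hfil : Finset.univ.filter (fun u : Fin n → F =>
        (fun i : {i // i ∈ B} => u i.1) = a ∧ Matrix.vecMul u W = c)
        = Finset.univ.filter (fun u : Fin n → F => f u = (a, c)) := by
      apply Finset.filter_congr
      intro u _
      simp [f, f₁, f₂, Prod.ext_iff]
    have hfil₁ : Finset.univ.filter (fun u : Fin n → F =>
        (fun i : {i // i ∈ B} => u i.1) = a)
        = Finset.univ.filter (fun u : Fin n → F => f₁ u = a) := by
      apply Finset.filter_congr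
      intro u _
      simp [f₁]
    have hfil₂ : Finset.univ.filter (fun u : Fin n → F => Matrix.vecMul u W = c)
        = Finset.univ.filter (fun u : Fin n → F => f₂ u = c) := by
      apply Finset.filter_congr
      intro u _
      simp [f₂]
    rw [hfil, hfil₁, hfil₂]
    rw [fiber_card_eq f (a, c) u₃ hu₃, fiber_card_eq f₁ a u₁ hu₁, fiber_card_eq f₂ c u₂ hu₂]
    set K := (Finset.univ.filter fun u : Fin n → F => f u = 0).card
    set K₁ := (Finset.univ.filter fun u : Fin n → F => f₁ u = 0).card
    set K₂ := (Finset.univ.filter fun u : Fin n → F => f₂ u = 0).card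
    have E1 : K₁ * Fintype.card ({i // i ∈ B} → F) = Fintype.card (Fin n → F) :=
      fiber_card_mul f₁ hf₁surj
    have E2 : K₂ * Fintype.card (Fin m → F) = Fintype.card (Fin n → F) :=
      fiber_card_mul f₂ hf₂surj
    have E3 : K * (Fintype.card ({i // i ∈ B} → F) * Fintype.card (Fin m → F))
        = Fintype.card (Fin n → F) := by
      have := fiber_card_mul f hfsurj
      rwa [Fintype.card_prod] at this
    set q1 := Fintype.card ({i // i ∈ B} → F)
    set q2 := Fintype.card (Fin m → F)
    set qG := Fintype.card (Fin n → F)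
    have hpos : 0 < q1 * q2 := Nat.mul_pos Fintype.card_pos Fintype.card_pos
    apply Nat.eq_of_mul_eq_mul_right hpos
    calc K * qG * (q1 * q2) = K * (q1 * q2) * qG := by ring
      _ = qG * qG := by rw [E3]
      _ = (K₁ * q1) * (K₂ * q2) := by rw [E1, E2]
      _ = K₁ * K₂ * (q1 * q2) := by ring
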